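/- Let $(X,d,\mu)$ be a doubling metric measure space with doubling constant $c_\mu$, $1<p<\infty$ with conjugate exponent $q$ ($1/p+1/q=1$), and $B_0$ a ball. Assume $f\in JN_p(B_0)$ with constant $K_f$ and $\lambda\ge\frac{1}{\mu(B_0)}\int_{11B_0}|f-f_{B_0}|\,d\mu$. Let $\{B_i(\lambda)\}_i$ and $\{B_j(2\lambda)\}_j$ be families of Calderón–Zygmund balls for $|f-f_{B_0}|$ at levels $\lambda$ and $2\lambda$ relative to $B_0$, and suppose every $B_j(2\lambda)$ is contained in $5B_i(\lambda)$ for some $i$. Then $\sum_j\mu(B_j(2\lambda)) \le \frac{c_\mu^{3/q}K_f}{\lambda}\left(\sum_i\mu(B_i(\lambda))\right)^{1/q}$. -/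

import Mathlib

open MeasureTheory Metric Set ENNReal

/-- `(X, d, μ)` is a doubling metric measure space with doubling constant `cμ`:
every ball has positive finite measure and `μ(2B) ≤ cμ · μ(B)` for all balls `B`. -/
def IsDoubling {X : Type*} [MetricSpace X] [MeasurableSpace X]
    (μ : Measure X) (cμ : ℝ) : Prop :=
  (∀ (x : X) (r : ℝ), 0 < r → 0 < μ (Metric.ball x r) ∧ μ (Metric.ball x r) < ⊤) ∧
  ∀ (x : X) (r : ℝ), 0 < r → μ (Metric.ball x (2 * r)) ≤ ENNReal.ofReal cμ * μ (Metric.ball x r)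

/-- `f` belongs to the John–Nirenberg space `JN_p(B₀)`, `B₀ = B(x₀, R)`, with constant `K`:
`∑ᵢ μ(Bᵢ) (⨍_{Bᵢ} |f - f_{Bᵢ}| dμ)^p ≤ K^p` whenever `{Bᵢ}` is a countable collection of
balls centered at points of `B₀` and contained in `11B₀` such that the balls `(1/5)Bᵢ` are
pairwise disjoint. -/
def IsJNp {X : Type*} [MetricSpace X] [MeasurableSpace X]
    (μ : Measure X) (p : ℝ) (x₀ : X) (R : ℝ) (f : X → ℝ) (K : ℝ) : Prop :=
  ∀ (S : Set ℕ) (c : ℕ → X) (r : ℕ → ℝ),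
    (∀ i ∈ S, c i ∈ Metric.ball x₀ R) →
    (∀ i ∈ S, Metric.ball (c i) (r i) ⊆ Metric.ball x₀ (11 * R)) →
    (S.PairwiseDisjoint fun i => Metric.ball (c i) (r i / 5)) →
    ∑' i : S, μ (Metric.ball (c i.1) (r i.1)) *
        ENNReal.ofReal
          ((⨍ x in Metric.ball (c i.1) (r i.1),
              |f x - ⨍ y in Metric.ball (c i.1) (r i.1), f y ∂μ| ∂μ) ^ p)
      ≤ ENNReal.ofReal (K ^ p)

/-- `{B i = ball (c i) (r i)}_{i ∈ S}` is a family of Calderón–Zygmund balls for the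
nonnegative function `g` at level `lam` relative to the ball `B₀ = B(x₀, R)`:
a countable family of pairwise disjoint balls centered at points of `B₀` with
`5Bᵢ ⊆ 11B₀`, such that `g ≤ lam` a.e. on `B₀ \ ⋃ᵢ 5Bᵢ`,
`lam < ⨍_{Bᵢ} g ≤ cμ³ lam` and `cμ⁻³ lam < ⨍_{5Bᵢ} g ≤ lam`. -/
def IsCZBalls {X : Type*} [MetricSpace X] [MeasurableSpace X]
    (μ : Measure X) (cμ : ℝ) (g : X → ℝ) (x₀ : X) (R lam : ℝ)
    (S : Set ℕ) (c : ℕ → X) (r : ℕ → ℝ) : Prop :=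
  (∀ i ∈ S, 0 < r i) ∧
  (∀ i ∈ S, c i ∈ Metric.ball x₀ R) ∧
  (∀ i ∈ S, Metric.ball (c i) (5 * r i) ⊆ Metric.ball x₀ (11 * R)) ∧
  (S.PairwiseDisjoint fun i => Metric.ball (c i) (r i)) ∧
  (∀ᵐ x ∂μ, x ∈ Metric.ball x₀ R \ (⋃ i ∈ S, Metric.ball (c i) (5 * r i)) → g x ≤ lam) ∧
  (∀ i ∈ S, lam < ⨍ x in Metric.ball (c i) (r i), g x ∂μ ∧
      ⨍ x in Metric.ball (c i) (r i), g x ∂μ ≤ cμ ^ 3 * lam) ∧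
  (∀ i ∈ S, lam / cμ ^ 3 < ⨍ x in Metric.ball (c i) (5 * r i), g x ∂μ ∧
      ⨍ x in Metric.ball (c i) (5 * r i), g x ∂μ ≤ lam)

/-- Good-λ estimate: if `f ∈ JN_p(B₀)` with constant `K`,
`λ ≥ μ(B₀)⁻¹ ∫_{11B₀} |f - f_{B₀}| dμ`, and `{B i(λ)}`, `{B j(2λ)}` are Calderón–Zygmund
families for `|f - f_{B₀}|` at levels `λ` and `2λ` with each `B j(2λ)` contained in some
`5 B i(λ)`, then `∑ⱼ μ(B j(2λ)) ≤ (cμ^{3/q} K / λ) (∑ᵢ μ(B i(λ)))^{1/q}`, where `q` is the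
conjugate exponent of `p`. -/
theorem good_lambda_iteration_step {X : Type*} [MetricSpace X] [MeasurableSpace X]
    [BorelSpace X]
    (μ : Measure X) (cμ : ℝ) (hcμ : 1 ≤ cμ) (hdoub : IsDoubling μ cμ)
    (p q : ℝ) (hp : 1 < p) (hq : 1 / p + 1 / q = 1)
    (x₀ : X) (R : ℝ) (hR : 0 < R) (f : X → ℝ)
    (hfint : IntegrableOn f (Metric.ball x₀ (11 * R)) μ)
    (K : ℝ) (hK : 0 ≤ K) (hJN : IsJNp μ p x₀ R f K)
    (lam : ℝ)
    (hlam : (μ (Metric.ball x₀ R)).toReal⁻¹ *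
        ∫ x in Metric.ball x₀ (11 * R),
          |f x - ⨍ y in Metric.ball x₀ R, f y ∂μ| ∂μ ≤ lam)
    (S₁ S₂ : Set ℕ) (c₁ c₂ : ℕ → X) (r₁ r₂ : ℕ → ℝ)
    (hCZ₁ : IsCZBalls μ cμ (fun x => |f x - ⨍ y in Metric.ball x₀ R, f y ∂μ|)
      x₀ R lam S₁ c₁ r₁)
    (hCZ₂ : IsCZBalls μ cμ (fun x => |f x - ⨍ y in Metric.ball x₀ R, f y ∂μ|)
      x₀ R (2 * lam) S₂ c₂ r₂)
    (hnest : ∀ j ∈ S₂, ∃ i ∈ S₁,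
      Metric.ball (c₂ j) (r₂ j) ⊆ Metric.ball (c₁ i) (5 * r₁ i)) :
    ∑' j : S₂, μ (Metric.ball (c₂ j.1) (r₂ j.1))
      ≤ ENNReal.ofReal (cμ ^ ((3 : ℝ) / q) * K / lam) *
        (∑' i : S₁, μ (Metric.ball (c₁ i.1) (r₁ i.1))) ^ (1 / q) := by
  classical
  obtain ⟨hball, hdoub2⟩ := hdoub
  obtain ⟨hr₁pos, hc₁mem, hsub₁, hdisj₁, -, hCZa₁, hCZb₁⟩ := hCZ₁
  obtain ⟨hr₂pos, hc₂mem, hsub₂, hdisj₂, -, hCZa₂, hCZb₂⟩ := hCZ₂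
  set A := ⨍ y in Metric.ball x₀ R, f y ∂μ with hA
  have hcμ0 : (0:ℝ) ≤ cμ := by linarith
  have hp0 : (0:ℝ) < p := one_pos.trans hp
  have h1p : 1 / p < 1 := (div_lt_one hp0).mpr hp
  have h1p0 : (0:ℝ) < 1 / p := by positivity
  have h1q0 : (0:ℝ) < 1 / q := by linarith
  have hq0 : (0:ℝ) < q := one_div_pos.mp h1q0
  have hpq : p.HolderConjugate q := Real.holderConjugate_iff.mpr ⟨hp, by simpa [one_div] using hq⟩
  have h11R : (0:ℝ) < 11 * R := by linarith
  have hμ11 : μ (Metric.ball x₀ (11 * R)) < ⊤ := (hball x₀ _ h11R).2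
  -- basic integrability
  have hint : ∀ s : Set X, s ⊆ Metric.ball x₀ (11 * R) → ∀ C : ℝ,
      IntegrableOn (fun x => |f x - C|) s μ := by
    intro s hs C
    have h1 : IntegrableOn f s μ := hfint.mono_set hs
    have h2 : IntegrableOn (fun _ => C) s μ :=
      integrableOn_const ((measure_mono hs).trans_lt hμ11).ne
    exact (h1.sub h2).abs
  have havg0 : ∀ (s : Set X) (C : ℝ), 0 ≤ ⨍ x in s, |f x - C| ∂μ := by
    intro s C
    rw [setAverage_eq, smul_eq_mul]
    exact mul_nonneg (by positivity) (integral_nonneg fun x => abs_nonneg _)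
  -- deviation of averages
  have hdev : ∀ s : Set X, s ⊆ Metric.ball x₀ (11 * R) → 0 < μ s →
      |(⨍ y in s, f y ∂μ) - A| ≤ ⨍ x in s, |f x - A| ∂μ := by
    intro s hs hμs
    have hμs' : μ s < ⊤ := (measure_mono hs).trans_lt hμ11
    have hfs : IntegrableOn f s μ := hfint.mono_set hs
    have hconst : IntegrableOn (fun _ => A) s μ := integrableOn_const hμs'.ne
    have hm0 : (0:ℝ) < (μ s).toReal := ENNReal.toReal_pos hμs.ne' hμs'.ne
    rw [setAverage_eq, setAverage_eq, smul_eq_mul, smul_eq_mul, measureReal_def]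
    have heq : (μ s).toReal⁻¹ * ∫ y in s, f y ∂μ - A
        = (μ s).toReal⁻¹ * ∫ y in s, (f y - A) ∂μ := by
      rw [integral_sub hfs hconst, integral_const, smul_eq_mul, measureReal_restrict_apply_univ,
        measureReal_def]
      field_simp
    rw [heq, abs_mul, abs_of_nonneg (by positivity : (0:ℝ) ≤ (μ s).toReal⁻¹)]
    refine mul_le_mul_of_nonneg_left ?_ (by positivity)
    simpa [Real.norm_eq_abs] using
      norm_integral_le_integral_norm (μ := μ.restrict s) (f := fun y => f y - A)
  have hlam0 : 0 ≤ lam :=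
    le_trans (mul_nonneg (by positivity) (integral_nonneg fun x => abs_nonneg _)) hlam
  -- choice of covering index
  have hchoice : ∀ j : ↥S₂, ∃ i, i ∈ S₁ ∧
      Metric.ball (c₂ j.1) (r₂ j.1) ⊆ Metric.ball (c₁ i) (5 * r₁ i) := fun j => by
    obtain ⟨i, hi, h⟩ := hnest j.1 j.2; exact ⟨i, hi, h⟩
  set ι : ↥S₂ → ↥S₁ := fun j => ⟨(hchoice j).choose, (hchoice j).choose_spec.1⟩ with hιdef
  have hι : ∀ j : ↥S₂,
      Metric.ball (c₂ j.1) (r₂ j.1) ⊆ Metric.ball (c₁ (ι j).1) (5 * r₁ (ι j).1) :=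
    fun j => (hchoice j).choose_spec.2
  -- the key real-valued estimate
  have key : ∀ j : ↥S₂, lam * (μ (Metric.ball (c₂ j.1) (r₂ j.1))).toReal
      ≤ ∫ x in Metric.ball (c₂ j.1) (r₂ j.1),
          |f x - ⨍ y in Metric.ball (c₁ (ι j).1) (5 * r₁ (ι j).1), f y ∂μ| ∂μ := by
    intro j
    have hiS : (ι j).1 ∈ S₁ := (ι j).2
    have hjS : j.1 ∈ S₂ := j.2
    set Bj := Metric.ball (c₂ j.1) (r₂ j.1) with hBjdef
    set Di := Metric.ball (c₁ (ι j).1) (5 * r₁ (ι j).1) with hDidef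
    have hBD : Bj ⊆ Di := hι j
    have hD11 : Di ⊆ Metric.ball x₀ (11 * R) := hsub₁ _ hiS
    have hB11 : Bj ⊆ Metric.ball x₀ (11 * R) := hBD.trans hD11
    have hμB0 : 0 < μ Bj := (hball _ _ (hr₂pos j.1 hjS)).1
    have hμBt : μ Bj < ⊤ := (measure_mono hB11).trans_lt hμ11
    have hμD0 : 0 < μ Di := (hball _ _ (by have := hr₁pos _ hiS; linarith)).1
    have hm : (0:ℝ) < (μ Bj).toReal := ENNReal.toReal_pos hμB0.ne' hμBt.ne
    set Av := ⨍ y in Di, f y ∂μ with hAvdef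
    have h3 : |Av - A| ≤ lam := (hdev Di hD11 hμD0).trans (hCZb₁ _ hiS).2
    have h1 : 2 * lam < ⨍ x in Bj, |f x - A| ∂μ := (hCZa₂ j.1 hjS).1
    have h4 : ⨍ x in Bj, |f x - A| ∂μ ≤ (⨍ x in Bj, |f x - Av| ∂μ) + |Av - A| := by
      have hpt : ∀ x, |f x - A| ≤ |f x - Av| + |Av - A| := fun x => by
        have : f x - A = (f x - Av) + (Av - A) := by ring
        rw [this]; exact abs_add_le _ _
      have hconst : IntegrableOn (fun _ => |Av - A|) Bj μ :=
        integrableOn_const hμBt.ne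
      have hle : ∫ x in Bj, |f x - A| ∂μ ≤ ∫ x in Bj, (|f x - Av| + |Av - A|) ∂μ :=
        integral_mono (hint Bj hB11 A) ((hint Bj hB11 Av).add hconst) hpt
      rw [integral_add (hint Bj hB11 Av) hconst, integral_const, smul_eq_mul,
        measureReal_restrict_apply_univ, measureReal_def] at hle
      rw [setAverage_eq, setAverage_eq, smul_eq_mul, smul_eq_mul, measureReal_def]
      have h6 := mul_le_mul_of_nonneg_left hle (le_of_lt (inv_pos.mpr hm))
      rw [mul_add] at h6
      have h7 : (μ Bj).toReal⁻¹ * ((μ Bj).toReal * |Av - A|) = |Av - A| := by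
        field_simp
      linarith
    have h5 : lam ≤ ⨍ x in Bj, |f x - Av| ∂μ := by linarith
    have h8 := mul_le_mul_of_nonneg_left h5 hm.le
    rw [setAverage_eq, smul_eq_mul, measureReal_def] at h8
    have h9 : (μ Bj).toReal * ((μ Bj).toReal⁻¹ * ∫ x in Bj, |f x - Av| ∂μ)
        = ∫ x in Bj, |f x - Av| ∂μ := by field_simp
    linarith [h8, h9.le]
  rcases hlam0.eq_or_lt with hlamz | hlam_pos
  · -- lam = 0 : the family at level 2·lam must be empty
    have hempty : IsEmpty ↥S₂ := by
      constructor
      intro j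
      have hjS : j.1 ∈ S₂ := j.2
      obtain ⟨i, hiS, hBD⟩ := hnest j.1 hjS
      set Bj := Metric.ball (c₂ j.1) (r₂ j.1) with hBjdef
      set Di := Metric.ball (c₁ i) (5 * r₁ i) with hDidef
      have hD11 : Di ⊆ Metric.ball x₀ (11 * R) := hsub₁ _ hiS
      have hB11 : Bj ⊆ Metric.ball x₀ (11 * R) := hBD.trans hD11
      have hμB0 : 0 < μ Bj := (hball _ _ (hr₂pos j.1 hjS)).1
      have hμBt : μ Bj < ⊤ := (measure_mono hB11).trans_lt hμ11
      have hμD0 : 0 < μ Di := (hball _ _ (by have := hr₁pos _ hiS; linarith)).1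
      have hμDt : μ Di < ⊤ := (measure_mono hD11).trans_lt hμ11
      have hmB : (0:ℝ) < (μ Bj).toReal := ENNReal.toReal_pos hμB0.ne' hμBt.ne
      have hmD : (0:ℝ) < (μ Di).toReal := ENNReal.toReal_pos hμD0.ne' hμDt.ne
      have h1 : 0 < ⨍ x in Bj, |f x - A| ∂μ := by
        have := (hCZa₂ j.1 hjS).1
        simp only at this
        linarith
      have h2 : ⨍ x in Di, |f x - A| ∂μ ≤ 0 := by
        have := (hCZb₁ i hiS).2
        simp only at this
        linarith
      rw [setAverage_eq, smul_eq_mul, measureReal_def] at h1 h2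
      have hI1 : 0 < ∫ x in Bj, |f x - A| ∂μ := by
        by_contra h
        push_neg at h
        nlinarith [inv_pos.mpr hmB]
      have hI2 : ∫ x in Di, |f x - A| ∂μ ≤ 0 := by
        by_contra h
        push_neg at h
        nlinarith [inv_pos.mpr hmD]
      have hmono : ∫ x in Bj, |f x - A| ∂μ ≤ ∫ x in Di, |f x - A| ∂μ :=
        setIntegral_mono_set (hint Di hD11 A)
          (Filter.Eventually.of_forall fun x => abs_nonneg _)
          (HasSubset.Subset.eventuallyLE hBD)
      linarith
    rw [tsum_empty]
    exact zero_le
  -- main case : lam > 0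
  have step1 : ∀ j : ↥S₂, ENNReal.ofReal lam * μ (Metric.ball (c₂ j.1) (r₂ j.1))
      ≤ ∫⁻ x in Metric.ball (c₂ j.1) (r₂ j.1),
          ENNReal.ofReal |f x - ⨍ y in Metric.ball (c₁ (ι j).1) (5 * r₁ (ι j).1), f y ∂μ| ∂μ := by
    intro j
    have hB11 : Metric.ball (c₂ j.1) (r₂ j.1) ⊆ Metric.ball x₀ (11 * R) :=
      (hι j).trans (hsub₁ _ (ι j).2)
    have hμBt : μ (Metric.ball (c₂ j.1) (r₂ j.1)) < ⊤ := (measure_mono hB11).trans_lt hμ11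
    rw [← ofReal_integral_eq_lintegral_ofReal
      (hint _ hB11 (⨍ y in Metric.ball (c₁ (ι j).1) (5 * r₁ (ι j).1), f y ∂μ))
      (Filter.Eventually.of_forall fun x => abs_nonneg _)]
    calc ENNReal.ofReal lam * μ (Metric.ball (c₂ j.1) (r₂ j.1))
        = ENNReal.ofReal (lam * (μ (Metric.ball (c₂ j.1) (r₂ j.1))).toReal) := by
          rw [ENNReal.ofReal_mul hlam0, ENNReal.ofReal_toReal hμBt.ne]
      _ ≤ ENNReal.ofReal (∫ x in Metric.ball (c₂ j.1) (r₂ j.1),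
            |f x - ⨍ y in Metric.ball (c₁ (ι j).1) (5 * r₁ (ι j).1), f y ∂μ| ∂μ) :=
          ENNReal.ofReal_le_ofReal (key j)
  have sum1 : ENNReal.ofReal lam * (∑' j : ↥S₂, μ (Metric.ball (c₂ j.1) (r₂ j.1)))
      ≤ ∑' j : ↥S₂, ∫⁻ x in Metric.ball (c₂ j.1) (r₂ j.1),
          ENNReal.ofReal |f x - ⨍ y in Metric.ball (c₁ (ι j).1) (5 * r₁ (ι j).1), f y ∂μ| ∂μ := by
    rw [← ENNReal.tsum_mul_left]
    exact ENNReal.tsum_le_tsum step1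
  have regroup : (∑' j : ↥S₂, ∫⁻ x in Metric.ball (c₂ j.1) (r₂ j.1),
        ENNReal.ofReal |f x - ⨍ y in Metric.ball (c₁ (ι j).1) (5 * r₁ (ι j).1), f y ∂μ| ∂μ)
      ≤ ∑' i : ↥S₁, ∫⁻ x in Metric.ball (c₁ i.1) (5 * r₁ i.1),
          ENNReal.ofReal |f x - ⨍ y in Metric.ball (c₁ i.1) (5 * r₁ i.1), f y ∂μ| ∂μ := by
    rw [← Equiv.tsum_eq (Equiv.sigmaFiberEquiv ι) (fun j : ↥S₂ =>
      ∫⁻ x in Metric.ball (c₂ j.1) (r₂ j.1),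
        ENNReal.ofReal |f x - ⨍ y in Metric.ball (c₁ (ι j).1) (5 * r₁ (ι j).1), f y ∂μ| ∂μ)]
    rw [ENNReal.tsum_sigma']
    refine ENNReal.tsum_le_tsum fun i => ?_
    have hpd : Pairwise (Function.onFun Disjoint fun b : {j : ↥S₂ // ι j = i} =>
        Metric.ball (c₂ b.1.1) (r₂ b.1.1)) := by
      intro a b hab
      exact hdisj₂ a.1.2 b.1.2 fun h => hab (Subtype.ext (Subtype.ext h))
    have hcongr : ∀ b : {j : ↥S₂ // ι j = i},
        (∫⁻ x in Metric.ball (c₂ b.1.1) (r₂ b.1.1),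
          ENNReal.ofReal |f x - ⨍ y in Metric.ball (c₁ (ι b.1).1) (5 * r₁ (ι b.1).1), f y ∂μ| ∂μ)
        = ∫⁻ x in Metric.ball (c₂ b.1.1) (r₂ b.1.1),
          ENNReal.ofReal |f x - ⨍ y in Metric.ball (c₁ i.1) (5 * r₁ i.1), f y ∂μ| ∂μ := by
      intro b; rw [b.2]
    calc (∑' b : {j : ↥S₂ // ι j = i}, ∫⁻ x in Metric.ball (c₂ b.1.1) (r₂ b.1.1),
          ENNReal.ofReal |f x - ⨍ y in Metric.ball (c₁ (ι b.1).1) (5 * r₁ (ι b.1).1), f y ∂μ| ∂μ)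
        = ∑' b : {j : ↥S₂ // ι j = i}, ∫⁻ x in Metric.ball (c₂ b.1.1) (r₂ b.1.1),
          ENNReal.ofReal |f x - ⨍ y in Metric.ball (c₁ i.1) (5 * r₁ i.1), f y ∂μ| ∂μ :=
          tsum_congr hcongr
      _ = ∫⁻ x in ⋃ b : {j : ↥S₂ // ι j = i}, Metric.ball (c₂ b.1.1) (r₂ b.1.1),
          ENNReal.ofReal |f x - ⨍ y in Metric.ball (c₁ i.1) (5 * r₁ i.1), f y ∂μ| ∂μ :=
          (lintegral_iUnion (fun b => measurableSet_ball) hpd _).symm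
      _ ≤ ∫⁻ x in Metric.ball (c₁ i.1) (5 * r₁ i.1),
          ENNReal.ofReal |f x - ⨍ y in Metric.ball (c₁ i.1) (5 * r₁ i.1), f y ∂μ| ∂μ := by
          refine lintegral_mono_set (Set.iUnion_subset fun b => ?_)
          have hb := hι b.1
          rw [b.2] at hb
          exact hb
  have sum2 : ∀ i : ↥S₁, (∫⁻ x in Metric.ball (c₁ i.1) (5 * r₁ i.1),
        ENNReal.ofReal |f x - ⨍ y in Metric.ball (c₁ i.1) (5 * r₁ i.1), f y ∂μ| ∂μ)
      = μ (Metric.ball (c₁ i.1) (5 * r₁ i.1)) *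
        ENNReal.ofReal (⨍ x in Metric.ball (c₁ i.1) (5 * r₁ i.1),
          |f x - ⨍ y in Metric.ball (c₁ i.1) (5 * r₁ i.1), f y ∂μ| ∂μ) := by
    intro i
    set Di := Metric.ball (c₁ i.1) (5 * r₁ i.1) with hDidef
    set AvI := ⨍ y in Di, f y ∂μ with hAvIdef
    have hD11 : Di ⊆ Metric.ball x₀ (11 * R) := hsub₁ _ i.2
    have hμD0 : 0 < μ Di := (hball _ _ (by have := hr₁pos _ i.2; linarith)).1
    have hμDt : μ Di < ⊤ := (measure_mono hD11).trans_lt hμ11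
    have hm : (0:ℝ) < (μ Di).toReal := ENNReal.toReal_pos hμD0.ne' hμDt.ne
    rw [← ofReal_integral_eq_lintegral_ofReal (hint Di hD11 AvI)
      (Filter.Eventually.of_forall fun x => abs_nonneg _)]
    rw [setAverage_eq, smul_eq_mul, measureReal_def,
      ENNReal.ofReal_mul (inv_nonneg.mpr hm.le), ← mul_assoc]
    have hone : μ Di * ENNReal.ofReal (μ Di).toReal⁻¹ = 1 := by
      nth_rewrite 1 [← ENNReal.ofReal_toReal hμDt.ne]
      rw [← ENNReal.ofReal_mul hm.le, mul_inv_cancel₀ hm.ne', ENNReal.ofReal_one]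
    rw [hone, one_mul]
  have hmeas : ∀ g : ↥S₁ → ℝ≥0∞, AEMeasurable g (Measure.count : Measure ↥S₁) :=
    fun g => (measurable_of_countable g).aemeasurable
  have holder := ENNReal.lintegral_mul_le_Lp_mul_Lq (Measure.count : Measure ↥S₁) hpq
    (hmeas fun i => μ (Metric.ball (c₁ i.1) (5 * r₁ i.1)) ^ (1/p) *
      ENNReal.ofReal (⨍ x in Metric.ball (c₁ i.1) (5 * r₁ i.1),
        |f x - ⨍ y in Metric.ball (c₁ i.1) (5 * r₁ i.1), f y ∂μ| ∂μ))
    (hmeas fun i => μ (Metric.ball (c₁ i.1) (5 * r₁ i.1)) ^ (1/q))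
  simp only [Pi.mul_apply, lintegral_count] at holder
  have hDfacts : ∀ i : ↥S₁, μ (Metric.ball (c₁ i.1) (5 * r₁ i.1)) ≠ 0 ∧
      μ (Metric.ball (c₁ i.1) (5 * r₁ i.1)) ≠ ⊤ := by
    intro i
    constructor
    · exact ((hball _ _ (by have := hr₁pos _ i.2; linarith)).1).ne'
    · exact ((measure_mono (hsub₁ _ i.2)).trans_lt hμ11).ne
  have e1 : ∀ i : ↥S₁, (μ (Metric.ball (c₁ i.1) (5 * r₁ i.1)) ^ (1/p) *
        ENNReal.ofReal (⨍ x in Metric.ball (c₁ i.1) (5 * r₁ i.1),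
          |f x - ⨍ y in Metric.ball (c₁ i.1) (5 * r₁ i.1), f y ∂μ| ∂μ)) *
        μ (Metric.ball (c₁ i.1) (5 * r₁ i.1)) ^ (1/q)
      = μ (Metric.ball (c₁ i.1) (5 * r₁ i.1)) *
        ENNReal.ofReal (⨍ x in Metric.ball (c₁ i.1) (5 * r₁ i.1),
          |f x - ⨍ y in Metric.ball (c₁ i.1) (5 * r₁ i.1), f y ∂μ| ∂μ) := by
    intro i
    rw [mul_right_comm, ← ENNReal.rpow_add _ _ (hDfacts i).1 (hDfacts i).2, hq,
      ENNReal.rpow_one]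
  have e2 : ∀ i : ↥S₁, (μ (Metric.ball (c₁ i.1) (5 * r₁ i.1)) ^ (1/p) *
        ENNReal.ofReal (⨍ x in Metric.ball (c₁ i.1) (5 * r₁ i.1),
          |f x - ⨍ y in Metric.ball (c₁ i.1) (5 * r₁ i.1), f y ∂μ| ∂μ)) ^ p
      = μ (Metric.ball (c₁ i.1) (5 * r₁ i.1)) *
        ENNReal.ofReal ((⨍ x in Metric.ball (c₁ i.1) (5 * r₁ i.1),
          |f x - ⨍ y in Metric.ball (c₁ i.1) (5 * r₁ i.1), f y ∂μ| ∂μ) ^ p) := by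
    intro i
    rw [ENNReal.mul_rpow_of_nonneg _ _ hp0.le, ← ENNReal.rpow_mul,
      one_div_mul_cancel hp0.ne', ENNReal.rpow_one,
      ENNReal.ofReal_rpow_of_nonneg (havg0 _ _) hp0.le]
  have e3 : ∀ i : ↥S₁, (μ (Metric.ball (c₁ i.1) (5 * r₁ i.1)) ^ (1/q)) ^ q
      = μ (Metric.ball (c₁ i.1) (5 * r₁ i.1)) := by
    intro i
    rw [← ENNReal.rpow_mul, one_div_mul_cancel hq0.ne', ENNReal.rpow_one]
  rw [tsum_congr e1, tsum_congr e2, tsum_congr e3] at holder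
  have hdisj5 : S₁.PairwiseDisjoint fun i => Metric.ball (c₁ i) (5 * r₁ i / 5) := by
    have e : (fun i => Metric.ball (c₁ i) (5 * r₁ i / 5)) = fun i => Metric.ball (c₁ i) (r₁ i) := by
      funext i; congr 1; ring
    rw [e]; exact hdisj₁
  have hjn := hJN S₁ c₁ (fun i => 5 * r₁ i) hc₁mem (fun i hi => hsub₁ i hi) hdisj5
  have hfac1 : (∑' i : ↥S₁, μ (Metric.ball (c₁ i.1) (5 * r₁ i.1)) *
        ENNReal.ofReal ((⨍ x in Metric.ball (c₁ i.1) (5 * r₁ i.1),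
          |f x - ⨍ y in Metric.ball (c₁ i.1) (5 * r₁ i.1), f y ∂μ| ∂μ) ^ p)) ^ (1/p)
      ≤ ENNReal.ofReal K := by
    have h := ENNReal.rpow_le_rpow hjn h1p0.le
    rwa [ENNReal.ofReal_rpow_of_nonneg (Real.rpow_nonneg hK p) h1p0.le,
      ← Real.rpow_mul hK, mul_one_div_cancel hp0.ne', Real.rpow_one] at h
  have hDB : ∀ i : ↥S₁, μ (Metric.ball (c₁ i.1) (5 * r₁ i.1))
      ≤ ENNReal.ofReal (cμ ^ 3) * μ (Metric.ball (c₁ i.1) (r₁ i.1)) := by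
    intro i
    have hr := hr₁pos i.1 i.2
    have h2 := hdoub2 (c₁ i.1) (2 * (2 * r₁ i.1)) (by linarith)
    have h3 := hdoub2 (c₁ i.1) (2 * r₁ i.1) (by linarith)
    have h4 := hdoub2 (c₁ i.1) (r₁ i.1) hr
    calc μ (Metric.ball (c₁ i.1) (5 * r₁ i.1))
        ≤ μ (Metric.ball (c₁ i.1) (2 * (2 * (2 * r₁ i.1)))) :=
          measure_mono (Metric.ball_subset_ball (by linarith))
      _ ≤ ENNReal.ofReal cμ * μ (Metric.ball (c₁ i.1) (2 * (2 * r₁ i.1))) := h2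
      _ ≤ ENNReal.ofReal cμ * (ENNReal.ofReal cμ * μ (Metric.ball (c₁ i.1) (2 * r₁ i.1))) :=
          mul_le_mul_right h3 _
      _ ≤ ENNReal.ofReal cμ * (ENNReal.ofReal cμ *
            (ENNReal.ofReal cμ * μ (Metric.ball (c₁ i.1) (r₁ i.1)))) :=
          mul_le_mul_right (mul_le_mul_right h4 _) _
      _ = ENNReal.ofReal (cμ ^ 3) * μ (Metric.ball (c₁ i.1) (r₁ i.1)) := by
          rw [ENNReal.ofReal_pow hcμ0]; ring
  have hsumD : (∑' i : ↥S₁, μ (Metric.ball (c₁ i.1) (5 * r₁ i.1)))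
      ≤ ENNReal.ofReal (cμ ^ 3) * ∑' i : ↥S₁, μ (Metric.ball (c₁ i.1) (r₁ i.1)) := by
    rw [← ENNReal.tsum_mul_left]
    exact ENNReal.tsum_le_tsum hDB
  have hfac2 : (∑' i : ↥S₁, μ (Metric.ball (c₁ i.1) (5 * r₁ i.1))) ^ (1/q)
      ≤ ENNReal.ofReal (cμ ^ ((3:ℝ)/q)) *
        (∑' i : ↥S₁, μ (Metric.ball (c₁ i.1) (r₁ i.1))) ^ (1/q) := by
    calc (∑' i : ↥S₁, μ (Metric.ball (c₁ i.1) (5 * r₁ i.1))) ^ (1/q)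
        ≤ (ENNReal.ofReal (cμ ^ 3) * ∑' i : ↥S₁, μ (Metric.ball (c₁ i.1) (r₁ i.1))) ^ (1/q) :=
          ENNReal.rpow_le_rpow hsumD h1q0.le
      _ = ENNReal.ofReal (cμ ^ 3) ^ (1/q) *
          (∑' i : ↥S₁, μ (Metric.ball (c₁ i.1) (r₁ i.1))) ^ (1/q) :=
          ENNReal.mul_rpow_of_nonneg _ _ h1q0.le
      _ = ENNReal.ofReal (cμ ^ ((3:ℝ)/q)) *
          (∑' i : ↥S₁, μ (Metric.ball (c₁ i.1) (r₁ i.1))) ^ (1/q) := by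
          rw [ENNReal.ofReal_rpow_of_nonneg (by positivity) h1q0.le]
          congr 2
          rw [← Real.rpow_natCast cμ 3, ← Real.rpow_mul hcμ0]
          norm_num [div_eq_mul_inv]
  have main : ENNReal.ofReal lam * (∑' j : ↥S₂, μ (Metric.ball (c₂ j.1) (r₂ j.1)))
      ≤ ENNReal.ofReal K * (ENNReal.ofReal (cμ ^ ((3:ℝ)/q)) *
          (∑' i : ↥S₁, μ (Metric.ball (c₁ i.1) (r₁ i.1))) ^ (1/q)) := by
    calc ENNReal.ofReal lam * (∑' j : ↥S₂, μ (Metric.ball (c₂ j.1) (r₂ j.1)))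
        ≤ ∑' j : ↥S₂, ∫⁻ x in Metric.ball (c₂ j.1) (r₂ j.1),
            ENNReal.ofReal |f x - ⨍ y in Metric.ball (c₁ (ι j).1) (5 * r₁ (ι j).1), f y ∂μ| ∂μ :=
          sum1
      _ ≤ ∑' i : ↥S₁, ∫⁻ x in Metric.ball (c₁ i.1) (5 * r₁ i.1),
            ENNReal.ofReal |f x - ⨍ y in Metric.ball (c₁ i.1) (5 * r₁ i.1), f y ∂μ| ∂μ :=
          regroup
      _ = ∑' i : ↥S₁, μ (Metric.ball (c₁ i.1) (5 * r₁ i.1)) *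
            ENNReal.ofReal (⨍ x in Metric.ball (c₁ i.1) (5 * r₁ i.1),
              |f x - ⨍ y in Metric.ball (c₁ i.1) (5 * r₁ i.1), f y ∂μ| ∂μ) :=
          tsum_congr sum2
      _ ≤ (∑' i : ↥S₁, μ (Metric.ball (c₁ i.1) (5 * r₁ i.1)) *
            ENNReal.ofReal ((⨍ x in Metric.ball (c₁ i.1) (5 * r₁ i.1),
              |f x - ⨍ y in Metric.ball (c₁ i.1) (5 * r₁ i.1), f y ∂μ| ∂μ) ^ p)) ^ (1/p) *
          (∑' i : ↥S₁, μ (Metric.ball (c₁ i.1) (5 * r₁ i.1))) ^ (1/q) := holder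
      _ ≤ ENNReal.ofReal K * (ENNReal.ofReal (cμ ^ ((3:ℝ)/q)) *
            (∑' i : ↥S₁, μ (Metric.ball (c₁ i.1) (r₁ i.1))) ^ (1/q)) :=
          mul_le_mul' hfac1 hfac2
  have hL0 : ENNReal.ofReal lam ≠ 0 := (ENNReal.ofReal_pos.mpr hlam_pos).ne'
  have hre : ENNReal.ofReal (cμ ^ ((3:ℝ)/q) * K / lam) *
      (∑' i : ↥S₁, μ (Metric.ball (c₁ i.1) (r₁ i.1))) ^ (1/q)
      = (ENNReal.ofReal (cμ ^ ((3:ℝ)/q) * K) *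
          (∑' i : ↥S₁, μ (Metric.ball (c₁ i.1) (r₁ i.1))) ^ (1/q)) / ENNReal.ofReal lam := by
    rw [ENNReal.ofReal_div_of_pos hlam_pos, ENNReal.div_eq_inv_mul, ENNReal.div_eq_inv_mul]
    ring
  rw [hre, ENNReal.le_div_iff_mul_le (Or.inl hL0) (Or.inl ENNReal.ofReal_ne_top)]
  rw [ENNReal.ofReal_mul (by positivity : (0:ℝ) ≤ cμ ^ ((3:ℝ)/q))]
  calc (∑' j : ↥S₂, μ (Metric.ball (c₂ j.1) (r₂ j.1))) * ENNReal.ofReal lam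
      = ENNReal.ofReal lam * (∑' j : ↥S₂, μ (Metric.ball (c₂ j.1) (r₂ j.1))) := mul_comm _ _
    _ ≤ ENNReal.ofReal K * (ENNReal.ofReal (cμ ^ ((3:ℝ)/q)) *
          (∑' i : ↥S₁, μ (Metric.ball (c₁ i.1) (r₁ i.1))) ^ (1/q)) := main
    _ = ENNReal.ofReal (cμ ^ ((3:ℝ)/q)) * ENNReal.ofReal K *
          (∑' i : ↥S₁, μ (Metric.ball (c₁ i.1) (r₁ i.1))) ^ (1/q) := by ring
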